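/- For each k ≥ 4 there exists a constant c_k > 0 such that for all sufficiently large N, there is a Sidon system of k-element subsets of {1,…,N} of cardinality at least c_k · N^{k-1}. -/

import Mathlib

open Finset Pointwise

namespace SidonAux

lemma pow4_lt {a b : ℕ} (h : a < b) : (4:ℤ)^a < 4^b :=
  pow_lt_pow_right₀ (by norm_num) h

lemma pow4_le {a b : ℕ} (h : a ≤ b) : (4:ℤ)^a ≤ 4^b :=
  pow_le_pow_right₀ (by norm_num) h

lemma pow4_inj {a b : ℕ} (h : (4:ℤ)^a = 4^b) : a = b := by
  rcases lt_trichotomy a b with hl | he | hl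
  · exact absurd h (ne_of_lt (pow4_lt hl))
  · exact he
  · exact absurd h (ne_of_gt (pow4_lt hl))

lemma pow4_sum_aux {i j p q : ℕ} (hij : i ≤ j) (hpq : p ≤ q)
    (h : (4:ℤ)^i + 4^j = 4^p + 4^q) : i = p ∧ j = q := by
  have hjq : j = q := by
    rcases lt_trichotomy j q with hlt | he | hlt
    · exfalso
      have h1 := pow4_le hij
      have h2 : (4:ℤ)^(j+1) ≤ 4^q := pow4_le hlt
      have h3 : (0:ℤ) < 4^p := by positivity
      have h4 : (4:ℤ)^(j+1) = 4*4^j := by ring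
      have h5 : (0:ℤ) < 4^j := by positivity
      linarith
    · exact he
    · exfalso
      have h1 := pow4_le hpq
      have h2 : (4:ℤ)^(q+1) ≤ 4^j := pow4_le hlt
      have h3 : (0:ℤ) < 4^i := by positivity
      have h4 : (4:ℤ)^(q+1) = 4*4^q := by ring
      have h5 : (0:ℤ) < 4^q := by positivity
      linarith
  subst hjq
  exact ⟨pow4_inj (by linarith), rfl⟩

lemma pow4_sum {i j p q : ℕ} (h : (4:ℤ)^i + 4^j = 4^p + 4^q) :
    (p = i ∧ q = j) ∨ (p = j ∧ q = i) := by
  rcases le_total i j with hij | hji <;> rcases le_total p q with hpq | hqp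
  · obtain ⟨h1, h2⟩ := pow4_sum_aux hij hpq h
    exact Or.inl ⟨h1.symm, h2.symm⟩
  · obtain ⟨h1, h2⟩ := pow4_sum_aux hij hqp (by linarith)
    exact Or.inr ⟨h2.symm, h1.symm⟩
  · obtain ⟨h1, h2⟩ := pow4_sum_aux hji hpq (by linarith)
    exact Or.inr ⟨h1.symm, h2.symm⟩
  · obtain ⟨h1, h2⟩ := pow4_sum_aux hji hqp (by linarith)
    exact Or.inl ⟨h2.symm, h1.symm⟩

lemma pow4_mod3 (n : ℕ) : (4:ℤ)^n % 3 = 1 := by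
  induction n with
  | zero => rfl
  | succ n ih => rw [pow_succ, Int.mul_emod, ih]; rfl

lemma block_eq {L s t c d : ℤ} (hL : 1 ≤ L) (hst : s % 3 = t % 3)
    (hc : 0 ≤ c) (hc2 : c < 2*L) (hd : 0 ≤ d) (hd2 : d < 2*L)
    (h : s*L + c = t*L + d) : s = t := by
  by_contra hne
  have hsub : (s - t) * L = d - c := by linear_combination h
  have h3 : 3 ≤ s - t ∨ s - t ≤ -3 := by omega
  have hL0 : (0:ℤ) ≤ L := by linarith
  rcases h3 with h3 | h3
  · have := mul_le_mul_of_nonneg_right h3 hL0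
    linarith
  · have := mul_le_mul_of_nonneg_right h3 hL0
    linarith

def eF (k L : ℕ) (x : Fin k → ℕ) (i : Fin k) : ℤ := 4^((i:ℕ)+1) * L + (x i : ℤ)

def SF (k L : ℕ) (x : Fin k → ℕ) : Finset ℤ := Finset.univ.image (eF k L x)

def DF (k L : ℕ) : Finset (Fin k → ℕ) :=
  Fintype.piFinset (fun i : Fin k => Finset.range (if (i:ℕ) = 0 then 1 else L))

end SidonAux

open SidonAux in
theorem sidon_system_lower_bound (k : ℕ) (hk : 4 ≤ k) :
    ∃ c : ℝ, 0 < c ∧ ∃ N₀ : ℕ, ∀ N : ℕ, N₀ ≤ N →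
      ∃ 𝒜 : Finset (Finset ℤ),
        (∀ A ∈ 𝒜, A ⊆ Finset.Icc (1 : ℤ) N ∧ A.card = k) ∧
        (∀ A ∈ 𝒜, ∀ B ∈ 𝒜, ∀ U ∈ 𝒜, ∀ V ∈ 𝒜,
          A + B = U + V → ({A, B} : Finset (Finset ℤ)) = {U, V}) ∧
        c * (N : ℝ) ^ (k - 1) ≤ (𝒜.card : ℝ) := by
  have hk0 : 0 < k := by omega
  set M : ℕ := 4^k + 1 with hM
  have hM0 : 0 < M := by positivity
  refine ⟨(1 / (2*M : ℝ))^(k-1), by positivity, 2*M, ?_⟩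
  intro N hN
  set L : ℕ := N / M with hLdef
  have hL1 : 1 ≤ L := (Nat.one_le_div_iff hM0).2 (by omega)
  have hML : M * L ≤ N := by
    rw [hLdef, mul_comm]; exact Nat.div_mul_le_self N M
  have hN2 : N ≤ 2*(M*L) := by
    have h1 := Nat.div_add_mod N M
    have h2 := Nat.mod_lt N hM0
    have h3 : M * 1 ≤ M * L := Nat.mul_le_mul_left M hL1
    rw [← hLdef] at h1
    nlinarith
  have hLZ : (1:ℤ) ≤ (L:ℤ) := by exact_mod_cast hL1
  let i0 : Fin k := ⟨0, hk0⟩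
  have hD : ∀ x ∈ DF k L, (∀ i, (x i : ℤ) < (L:ℤ)) ∧ x i0 = 0 := by
    intro x hx
    have hx' := Fintype.mem_piFinset.1 hx
    constructor
    · intro i
      have h := Finset.mem_range.1 (hx' i)
      split_ifs at h with hcase
      · have : x i = 0 := by omega
        rw [this]; push_cast; linarith
      · exact_mod_cast h
    · have h := Finset.mem_range.1 (hx' i0)
      simp only [i0] at h
      norm_num at h
      exact h
  have hmemS : ∀ (x : Fin k → ℕ) (i : Fin k), eF k L x i ∈ SF k L x :=
    fun x i => Finset.mem_image_of_mem _ (Finset.mem_univ i)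
  have hSmem : ∀ (x : Fin k → ℕ) (t : ℤ), t ∈ SF k L x → ∃ i, eF k L x i = t := by
    intro x t ht
    obtain ⟨i, _, h⟩ := Finset.mem_image.1 ht
    exact ⟨i, h⟩
  have hmatch : ∀ x y z w : Fin k → ℕ, (∀ i, (x i:ℤ) < L) → (∀ i, (y i:ℤ) < L) →
      (∀ i, (z i:ℤ) < L) → (∀ i, (w i:ℤ) < L) →
      ∀ i j p q : Fin k, eF k L x i + eF k L y j = eF k L z p + eF k L w q →
      ((p = i ∧ q = j) ∨ (p = j ∧ q = i)) ∧ ((x i : ℤ) + y j = z p + w q) := by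
    intro x y z w hx hy hz hw i j p q h
    simp only [eF] at h
    have h' : ((4:ℤ)^((i:ℕ)+1) + 4^((j:ℕ)+1)) * L + ((x i:ℤ) + y j)
        = ((4:ℤ)^((p:ℕ)+1) + 4^((q:ℕ)+1)) * L + ((z p:ℤ) + w q) := by
      linear_combination h
    have hpow : (4:ℤ)^((i:ℕ)+1) + 4^((j:ℕ)+1) = 4^((p:ℕ)+1) + 4^((q:ℕ)+1) := by
      refine block_eq hLZ ?_ ?_ ?_ ?_ ?_ h'
      · have a := pow4_mod3 ((i:ℕ)+1); have b := pow4_mod3 ((j:ℕ)+1)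
        have cc := pow4_mod3 ((p:ℕ)+1); have dd := pow4_mod3 ((q:ℕ)+1); omega
      · positivity
      · have := hx i; have := hy j; have a : (0:ℤ) ≤ x i := by positivity
        have b : (0:ℤ) ≤ y j := by positivity
        linarith
      · positivity
      · have := hz p; have := hw q; have a : (0:ℤ) ≤ z p := by positivity
        have b : (0:ℤ) ≤ w q := by positivity
        linarith
    have hoff : (x i : ℤ) + y j = z p + w q := by
      rw [hpow] at h'; linarith
    refine ⟨?_, hoff⟩
    rcases pow4_sum hpow with ⟨h1, h2⟩ | ⟨h1, h2⟩
    · exact Or.inl ⟨Fin.val_injective (by omega), Fin.val_injective (by omega)⟩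
    · exact Or.inr ⟨Fin.val_injective (by omega), Fin.val_injective (by omega)⟩
  have hsidon : ∀ x ∈ DF k L, ∀ y ∈ DF k L, ∀ z ∈ DF k L, ∀ w ∈ DF k L,
      SF k L x + SF k L y = SF k L z + SF k L w → (x = z ∧ y = w) ∨ (x = w ∧ y = z) := by
    intro x hxD y hyD z hzD w hwD hsum
    obtain ⟨hx, hx0⟩ := hD x hxD
    obtain ⟨hy, hy0⟩ := hD y hyD
    obtain ⟨hz, hz0⟩ := hD z hzD
    obtain ⟨hw, hw0⟩ := hD w hwD
    have stepA : ∀ i j : Fin k, ((x i:ℤ) + y j = z i + w j) ∨ ((x i:ℤ) + y j = z j + w i) := by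
      intro i j
      have hmem : eF k L x i + eF k L y j ∈ SF k L z + SF k L w := by
        rw [← hsum]; exact Finset.add_mem_add (hmemS x i) (hmemS y j)
      obtain ⟨a, ha, b, hb, hab⟩ := Finset.mem_add.1 hmem
      obtain ⟨p, hp⟩ := hSmem z a ha
      obtain ⟨q, hq⟩ := hSmem w b hb
      have heq : eF k L x i + eF k L y j = eF k L z p + eF k L w q := by rw [hp, hq, hab]
      obtain ⟨hcase, hoff⟩ := hmatch x y z w hx hy hz hw i j p q heq
      rcases hcase with ⟨rfl, rfl⟩ | ⟨rfl, rfl⟩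
      · exact Or.inl hoff
      · exact Or.inr hoff
    have diag : ∀ i : Fin k, (x i:ℤ) + y i = (z i:ℤ) + w i := by
      intro i; rcases stepA i i with h | h <;> exact h
    have dich : ∀ i : Fin k, ((x i:ℤ) = z i ∧ (y i:ℤ) = w i) ∨ ((x i:ℤ) = w i ∧ (y i:ℤ) = z i) := by
      intro i
      have hd := diag i
      have hxi : (x i:ℤ) = z i ∨ (x i:ℤ) = w i := by
        rcases stepA i i0 with h | h
        · left; rw [hy0, hw0] at h; push_cast at h; linarith
        · right; rw [hy0, hz0] at h; push_cast at h; linarith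
      rcases hxi with h1 | h1
      · exact Or.inl ⟨h1, by linarith⟩
      · exact Or.inr ⟨h1, by linarith⟩
    by_cases hall : ∀ i, (x i:ℤ) = z i ∧ (y i:ℤ) = w i
    · exact Or.inl ⟨funext fun i => Nat.cast_injective (hall i).1,
        funext fun i => Nat.cast_injective (hall i).2⟩
    · obtain ⟨j, hj⟩ := not_forall.1 hall
      have hjs : (x j:ℤ) = w j ∧ (y j:ℤ) = z j := (dich j).resolve_left hj
      have hjne : (x j:ℤ) ≠ y j := by
        intro hcon
        exact hj ⟨by rw [hcon, hjs.2], by rw [← hcon, hjs.1]⟩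
      have hswap : ∀ i, (x i:ℤ) = w i ∧ (y i:ℤ) = z i := by
        intro i
        rcases dich i with h | h
        · by_cases hxy : (x i:ℤ) = y i
          · exact ⟨by rw [hxy, h.2], by rw [← hxy, h.1]⟩
          · exfalso
            rcases stepA i j with hc | hc
            · exact hjne (by linarith [h.1, hjs.1])
            · exact hxy (by linarith [h.2, hjs.2])
        · exact h
      exact Or.inr ⟨funext fun i => Nat.cast_injective (hswap i).1,
        funext fun i => Nat.cast_injective (hswap i).2⟩
  refine ⟨(DF k L).image (SF k L), ?_, ?_, ?_⟩
  · intro A hA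
    obtain ⟨x, hxD, rfl⟩ := Finset.mem_image.1 hA
    obtain ⟨hx, -⟩ := hD x hxD
    constructor
    · intro t ht
      obtain ⟨i, rfl⟩ := hSmem x t ht
      simp only [eF, Finset.mem_Icc]
      constructor
      · have h1 : (4:ℤ) ≤ 4^((i:ℕ)+1) := by
          calc (4:ℤ) = 4^1 := by ring
          _ ≤ _ := pow4_le (by omega)
        have h2 := mul_le_mul h1 hLZ (by norm_num) (by positivity)
        have hxc : (0:ℤ) ≤ (x i:ℤ) := by positivity
        linarith
      · have h1 : (4:ℤ)^((i:ℕ)+1) ≤ 4^k := pow4_le (Nat.succ_le_of_lt i.isLt)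
        have h2 : (4:ℤ)^((i:ℕ)+1) * L ≤ 4^k * L := mul_le_mul_of_nonneg_right h1 (by linarith)
        have h3 : (x i : ℤ) ≤ L - 1 := by
          have := hx i
          omega
        have h4 : ((M:ℤ)) * L ≤ N := by exact_mod_cast hML
        have h5 : (M:ℤ) = 4^k + 1 := by rw [hM]; push_cast; ring
        have h6 : (M:ℤ)*L = 4^k*L + L := by rw [h5]; ring
        linarith
    · rw [show SF k L x = Finset.univ.image (eF k L x) from rfl]
      rw [Finset.card_image_of_injOn, Finset.card_univ, Fintype.card_fin]
      intro i _ j _ hij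
      simp only [eF] at hij
      have hpow : (4:ℤ)^((i:ℕ)+1) = 4^((j:ℕ)+1) := by
        refine block_eq hLZ ?_ ?_ ?_ ?_ ?_ hij
        · rw [pow4_mod3, pow4_mod3]
        · positivity
        · have := hx i; have a : (0:ℤ) ≤ x i := by positivity
          linarith
        · positivity
        · have := hx j; have a : (0:ℤ) ≤ x j := by positivity
          linarith
      have := pow4_inj hpow
      exact Fin.val_injective (by omega)
  · intro A hA B hB U hU V hV hsum
    obtain ⟨x, hxD, rfl⟩ := Finset.mem_image.1 hA
    obtain ⟨y, hyD, rfl⟩ := Finset.mem_image.1 hB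
    obtain ⟨z, hzD, rfl⟩ := Finset.mem_image.1 hU
    obtain ⟨w, hwD, rfl⟩ := Finset.mem_image.1 hV
    rcases hsidon x hxD y hyD z hzD w hwD hsum with ⟨rfl, rfl⟩ | ⟨rfl, rfl⟩
    · rfl
    · exact Finset.pair_comm _ _
  · have hcard : ((DF k L).image (SF k L)).card = (DF k L).card := by
      apply Finset.card_image_of_injOn
      intro x hxD y hyD hS
      obtain ⟨hx, -⟩ := hD x hxD
      obtain ⟨hy, -⟩ := hD y hyD
      funext i
      have hmem : eF k L x i ∈ SF k L y := by rw [← hS]; exact hmemS x i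
      obtain ⟨j, hj⟩ := hSmem y _ hmem
      simp only [eF] at hj
      have hpow : (4:ℤ)^((j:ℕ)+1) = 4^((i:ℕ)+1) := by
        refine block_eq hLZ ?_ ?_ ?_ ?_ ?_ hj
        · rw [pow4_mod3, pow4_mod3]
        · positivity
        · have := hy j; have a : (0:ℤ) ≤ y j := by positivity
          linarith
        · positivity
        · have := hx i; have a : (0:ℤ) ≤ x i := by positivity
          linarith
      have hji : j = i := Fin.val_injective (by have := pow4_inj hpow; omega)
      subst hji
      have : (y j:ℤ) = x j := by rw [hpow] at hj; linarith
      exact (Nat.cast_injective this).symm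
    have hDcard : (DF k L).card = L^(k-1) := by
      rw [DF, Fintype.card_piFinset]
      simp only [Finset.card_range]
      rw [← Finset.mul_prod_erase Finset.univ _ (Finset.mem_univ i0)]
      rw [if_pos rfl, one_mul]
      rw [Finset.prod_congr rfl (fun i hi => if_neg ?_), Finset.prod_const,
        Finset.card_erase_of_mem (Finset.mem_univ i0), Finset.card_univ, Fintype.card_fin]
      intro hi0
      have : i = i0 := Fin.val_injective hi0
      exact (Finset.mem_erase.1 hi).1 this
    rw [hcard, hDcard]
    have hL2 : (N:ℝ) ≤ 2*M*L := by
      have : (N:ℝ) ≤ 2*(M*L) := by exact_mod_cast hN2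
      push_cast at this ⊢
      linarith
    have hM0' : (0:ℝ) < 2*M := by positivity
    have hdiv : (N:ℝ)/(2*M) ≤ L := by
      rw [div_le_iff₀ hM0']
      linarith
    calc (1/(2*M:ℝ))^(k-1) * N^(k-1) = ((N:ℝ)/(2*M))^(k-1) := by
          rw [div_eq_mul_one_div (N:ℝ) (2*M), mul_comm (N:ℝ), mul_pow]
      _ ≤ (L:ℝ)^(k-1) := pow_le_pow_left₀ (by positivity) hdiv _
      _ = ((L^(k-1) : ℕ) : ℝ) := by push_cast; ring
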